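/- arXiv:1407.4993 — 7 statements merged into one kernel-verified Lean document; each statement's English description precedes it below -/
import Mathlib

section
/- Let ℓ, ℓ′ ∈ ℝⁿ be ordered generic length vectors. Then ℓ and ℓ′ lie in the same chamber (the same connected component of ℋ) if and only if S_k(ℓ) = S_k(ℓ′) for all k = 0, 1, …, n−3. -/
noncomputable section

/-- `ℝ^d` with the Euclidean norm. -/
abbrev Euc (d : ℕ) := EuclideanSpace ℝ (Fin d)

/-- A subset `J` is `ℓ`-short if the sum of its entries is less than the sum over the complement. -/
def Short {n : ℕ} (ℓ : Fin n → ℝ) (J : Finset (Fin n)) : Prop :=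
  ∑ j ∈ J, ℓ j < ∑ j ∈ Jᶜ, ℓ j

/-- A subset is `ℓ`-long if its complement is `ℓ`-short. -/
def Long {n : ℕ} (ℓ : Fin n → ℝ) (J : Finset (Fin n)) : Prop := Short ℓ Jᶜ

/-- `ℓ` is generic if every subset is `ℓ`-short or `ℓ`-long. -/
def Generic {n : ℕ} (ℓ : Fin n → ℝ) : Prop := ∀ J : Finset (Fin n), Short ℓ J ∨ Long ℓ J

/-- `ℓ` is `d`-regular if the intersection of all `ℓ`-long subsets of cardinality `d-1`
is nonempty (with the convention that the empty intersection is everything). -/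
def DRegular (d : ℕ) {n : ℕ} (ℓ : Fin n → ℝ) : Prop :=
  ∃ i : Fin n, ∀ J : Finset (Fin n), J.card = d - 1 → Long ℓ J → i ∈ J

/-- The complement in `ℝⁿ_{>0}` of all the hyperplanes `H_J`; its connected components
are the chambers. -/
def Hcal (n : ℕ) : Set (Fin n → ℝ) :=
  {x | (∀ i, 0 < x i) ∧ ∀ J : Finset (Fin n), ∑ j ∈ J, x j ≠ ∑ j ∈ Jᶜ, x j}

/-- `S_k(ℓ)`: the `ℓ`-short subsets of cardinality `k+1` containing the last index. -/
def Sk (n : ℕ) (hn : 0 < n) (k : ℕ) (ℓ : Fin n → ℝ) : Set (Finset (Fin n)) :=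
  {J | (⟨n - 1, Nat.sub_lt hn one_pos⟩ : Fin n) ∈ J ∧ J.card = k + 1 ∧ Short ℓ J}

/-- A set and its complement cannot both be short. -/
lemma not_short_and_short_compl {n : ℕ} (ℓ : Fin n → ℝ) (J : Finset (Fin n)) :
    ¬ (Short ℓ J ∧ Short ℓ Jᶜ) := by
  rintro ⟨h1, h2⟩
  rw [Short, compl_compl] at h2
  exact absurd h1 (not_lt.2 h2.le)

/-- Generic vectors avoid all the hyperplanes. -/
lemma generic_ne {n : ℕ} {ℓ : Fin n → ℝ} (hgen : Generic ℓ) (J : Finset (Fin n)) :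
    ∑ j ∈ J, ℓ j ≠ ∑ j ∈ Jᶜ, ℓ j := by
  rcases hgen J with h | h
  · exact ne_of_lt h
  · rw [Long, Short, compl_compl] at h
    exact (ne_of_lt h).symm

/-- A set containing the last index with at least `n-1` elements is not short. -/
lemma not_short_of_big {n : ℕ} (hn : 0 < n) {ℓ : Fin n → ℝ} (hpos : ∀ i, 0 < ℓ i)
    (hord : Monotone ℓ) {J : Finset (Fin n)}
    (hmem : (⟨n - 1, Nat.sub_lt hn one_pos⟩ : Fin n) ∈ J) (hcard : n - 1 ≤ J.card) :
    ¬ Short ℓ J := by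
  set last : Fin n := ⟨n - 1, Nat.sub_lt hn one_pos⟩ with hlast
  have hc : Jᶜ.card ≤ 1 := by
    have := Finset.card_le_univ J
    rw [Finset.card_compl]
    simp only [Fintype.card_fin] at *
    omega
  have h1 : ∑ j ∈ Jᶜ, ℓ j ≤ ℓ last := by
    have hle : ∀ i ∈ Jᶜ, ℓ i ≤ ℓ last := by
      intro i _
      apply hord
      have hi := i.isLt
      simp only [Fin.le_def, hlast]
      omega
    calc ∑ j ∈ Jᶜ, ℓ j ≤ Jᶜ.card • ℓ last := Finset.sum_le_card_nsmul _ _ _ hle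
      _ = (Jᶜ.card : ℝ) * ℓ last := by rw [nsmul_eq_mul]
      _ ≤ 1 * ℓ last := by
          apply mul_le_mul_of_nonneg_right _ (hpos last).le
          exact_mod_cast hc
      _ = ℓ last := one_mul _
  have h2 : ℓ last ≤ ∑ j ∈ J, ℓ j :=
    Finset.single_le_sum (fun i _ => (hpos i).le) hmem
  intro hs
  exact absurd hs (not_lt.2 (h1.trans h2))

/-- The key transfer lemma: equality of the `S_k` transfers shortness of sets
containing the last index. -/
lemma short_transfer {n : ℕ} (hn : 0 < n) {ℓ ℓ' : Fin n → ℝ}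
    (hpos : ∀ i, 0 < ℓ i) (hord : Monotone ℓ)
    (hSk : ∀ k ≤ n - 3, Sk n hn k ℓ = Sk n hn k ℓ')
    {J : Finset (Fin n)} (hmem : (⟨n - 1, Nat.sub_lt hn one_pos⟩ : Fin n) ∈ J)
    (hs : Short ℓ J) : Short ℓ' J := by
  by_cases hc : J.card ≤ n - 2
  · have hcard1 : 1 ≤ J.card := Finset.card_pos.2 ⟨_, hmem⟩
    have hk : J ∈ Sk n hn (J.card - 1) ℓ := ⟨hmem, by omega, hs⟩
    rw [hSk (J.card - 1) (by omega)] at hk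
    exact hk.2.2
  · exact absurd hs (not_short_of_big hn hpos hord hmem (by omega))

/-- Equality of the `S_k` implies all shortness data transfers. -/
lemma shorts_of_Sk {n : ℕ} (hn : 0 < n) {ℓ ℓ' : Fin n → ℝ}
    (hpos : ∀ i, 0 < ℓ i) (hpos' : ∀ i, 0 < ℓ' i)
    (hord : Monotone ℓ) (hord' : Monotone ℓ') (hgen' : Generic ℓ')
    (hSk : ∀ k ≤ n - 3, Sk n hn k ℓ = Sk n hn k ℓ')
    (J : Finset (Fin n)) (hs : Short ℓ J) : Short ℓ' J := by
  by_cases hmem : (⟨n - 1, Nat.sub_lt hn one_pos⟩ : Fin n) ∈ J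
  · exact short_transfer hn hpos hord hSk hmem hs
  · by_contra h
    have hl : Short ℓ' Jᶜ := (hgen' J).resolve_left h
    have hmem' : (⟨n - 1, Nat.sub_lt hn one_pos⟩ : Fin n) ∈ Jᶜ := Finset.mem_compl.2 hmem
    have h2 : Short ℓ Jᶜ :=
      short_transfer hn hpos' hord' (fun k hk => (hSk k hk).symm) hmem' hl
    exact not_short_and_short_compl ℓ J ⟨hs, h2⟩

lemma convex_lt {a b p q r s : ℝ} (ha : 0 ≤ a) (hb : 0 ≤ b) (hab : a + b = 1)
    (h1 : p < r) (h2 : q < s) : a * p + b * q < a * r + b * s := by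
  rcases ha.eq_or_lt with rfl | ha'
  · have hb1 : b = 1 := by linarith
    simp [hb1]; linarith
  · have c1 := mul_lt_mul_of_pos_left h1 ha'
    have c2 := mul_le_mul_of_nonneg_left h2.le hb
    linarith

/-- Two ordered generic length vectors `ℓ, ℓ'` lie in the same chamber
(connected component of `ℋ`) iff `S_k(ℓ) = S_k(ℓ')` for all `k = 0, …, n-3`. -/
theorem stmt2 (n : ℕ) (hn : 0 < n) (ℓ ℓ' : Fin n → ℝ)
    (hpos : ∀ i, 0 < ℓ i) (hpos' : ∀ i, 0 < ℓ' i)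
    (hord : Monotone ℓ) (hord' : Monotone ℓ')
    (hgen : Generic ℓ) (hgen' : Generic ℓ') :
    ℓ' ∈ connectedComponentIn (Hcal n) ℓ ↔ ∀ k ≤ n - 3, Sk n hn k ℓ = Sk n hn k ℓ' := by
  have hℓH : ℓ ∈ Hcal n := ⟨hpos, generic_ne hgen⟩
  constructor
  · -- same component → same S_k
    intro h
    have hpre : IsPreconnected (connectedComponentIn (Hcal n) ℓ) :=
      isPreconnected_connectedComponentIn
    have hmemℓ : ℓ ∈ connectedComponentIn (Hcal n) ℓ := mem_connectedComponentIn hℓH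
    -- shortness data agrees via the intermediate value theorem
    have key : ∀ J : Finset (Fin n), Short ℓ J ↔ Short ℓ' J := by
      have main : ∀ (a b : Fin n → ℝ), a ∈ connectedComponentIn (Hcal n) ℓ →
          b ∈ connectedComponentIn (Hcal n) ℓ → ∀ J : Finset (Fin n),
          Short a J → (∑ j ∈ Jᶜ, b j) < ∑ j ∈ J, b j → False := by
        intro a b hma hmb J hsa hb
        set f : (Fin n → ℝ) → ℝ := fun x => ∑ j ∈ J, x j - ∑ j ∈ Jᶜ, x j with hf
        have hfc : Continuous f := by
          apply Continuous.sub <;> exact continuous_finset_sum _ (fun i _ => continuous_apply i)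
        have hiv := hpre.intermediate_value hma hmb hfc.continuousOn
        have h0 : (0 : ℝ) ∈ Set.Icc (f a) (f b) := by
          constructor
          · simp only [hf, sub_nonpos]
            exact hsa.le
          · simp only [hf, sub_nonneg]
            exact hb.le
        obtain ⟨x, hx, hfx⟩ := hiv h0
        have hxH := connectedComponentIn_subset (Hcal n) ℓ hx
        exact hxH.2 J (by simpa [hf, sub_eq_zero] using hfx)
      intro J
      constructor
      · intro hs
        by_contra hns
        have hl : Short ℓ' Jᶜ := (hgen' J).resolve_left hns
        rw [Short, compl_compl] at hl
        exact main ℓ ℓ' hmemℓ h J hs hl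
      · intro hs
        by_contra hns
        have hl : Short ℓ Jᶜ := (hgen J).resolve_left hns
        rw [Short, compl_compl] at hl
        exact main ℓ' ℓ h hmemℓ J hs hl
    intro k _
    ext J
    simp only [Sk, Set.mem_setOf_eq]
    exact and_congr_right fun _ => and_congr_right fun _ => key J
  · -- same S_k → same component
    intro hSk
    have k1 : ∀ J, Short ℓ J → Short ℓ' J :=
      shorts_of_Sk hn hpos hpos' hord hord' hgen' hSk
    have k2 : ∀ J, Short ℓ' J → Short ℓ J :=
      shorts_of_Sk hn hpos' hpos hord' hord hgen (fun k hk => (hSk k hk).symm)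
    have hseg : segment ℝ ℓ ℓ' ⊆ Hcal n := by
      rintro x ⟨a, b, ha, hb, hab, rfl⟩
      constructor
      · intro i
        have := convex_lt (p := 0) (q := 0) ha hb hab (hpos i) (hpos' i)
        simpa using this
      · intro J heq
        have hx1 : ∀ K : Finset (Fin n), ∑ j ∈ K, (a • ℓ + b • ℓ') j
            = a * ∑ j ∈ K, ℓ j + b * ∑ j ∈ K, ℓ' j := by
          intro K
          simp [Finset.sum_add_distrib, Finset.mul_sum]
        rw [hx1 J, hx1 Jᶜ] at heq
        rcases hgen J with hs | hl
        · have hs' := k1 J hs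
          have := convex_lt ha hb hab hs hs'
          linarith
        · rw [Long] at hl
          have hl' := k1 Jᶜ hl
          rw [Short, compl_compl] at hl hl'
          have := convex_lt ha hb hab hl hl'
          linarith
    have hsub : segment ℝ ℓ ℓ' ⊆ connectedComponentIn (Hcal n) ℓ :=
      ((convex_segment ℓ ℓ').isPreconnected).subset_connectedComponentIn
        (left_mem_segment ℝ ℓ ℓ') hseg
    exact hsub (right_mem_segment ℝ ℓ ℓ')
end
end

section
/- Let d ≥ 2, n ≥ d, and let ℓ ∈ ℝⁿ be an ordered length vector. Then ℓ is d-regular if and only if the set {n−d+1, n−d+2, …, n−1} is not ℓ-long. -/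
noncomputable section

/-- The `k`-th value of a strictly monotone map `Fin m → ℕ` is at least `k`. -/
lemma strictMono_le_apply {m : ℕ} (u : Fin m → ℕ) (hu : StrictMono u) (k : Fin m) :
    (k : ℕ) ≤ u k := by
  obtain ⟨v, hv⟩ := k
  induction v with
  | zero => exact Nat.zero_le _
  | succ v ih =>
    have hv' : v < m := by omega
    have h1 : u ⟨v, hv'⟩ < u ⟨v + 1, hv⟩ := hu (by simp [Fin.lt_def])
    have h2 := ih hv'
    simp only [Fin.val_mk] at h2 ⊢
    omega

/-- `Long` in terms of total sum. -/
lemma long_iff {n : ℕ} (ℓ : Fin n → ℝ) (J : Finset (Fin n)) :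
    Long ℓ J ↔ ∑ j, ℓ j < 2 * ∑ j ∈ J, ℓ j := by
  have h : ∑ j ∈ J, ℓ j + ∑ j ∈ Jᶜ, ℓ j = ∑ j, ℓ j := Finset.sum_add_sum_compl J ℓ
  constructor
  · intro hl
    have := hl
    unfold Long Short at this
    rw [compl_compl] at this
    linarith
  · intro hl
    unfold Long Short
    rw [compl_compl]
    linarith

/-- For `d ≥ 2`, `n ≥ d` and an ordered length vector `ℓ ∈ ℝⁿ`,
`ℓ` is `d`-regular iff the set `{n-d+1, …, n-1}` (of the `d-1` largest indices below `n`)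
is not `ℓ`-long. -/
theorem stmt4 (d n : ℕ) (hd : 2 ≤ d) (hn : d ≤ n) (ℓ : Fin n → ℝ)
    (hpos : ∀ i, 0 < ℓ i) (hord : Monotone ℓ) :
    DRegular d ℓ ↔
      ¬ Long ℓ (Finset.univ.filter fun i : Fin n => n - d ≤ (i : ℕ) ∧ (i : ℕ) < n - 1) := by
  classical
  have hn2 : 2 ≤ n := le_trans hd hn
  set T : Finset (Fin n) :=
    Finset.univ.filter fun i : Fin n => n - d ≤ (i : ℕ) ∧ (i : ℕ) < n - 1 with hT
  have hnpos : 0 < n := by omega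
  set last : Fin n := ⟨n - 1, by omega⟩ with hlast
  have hlast_notT : last ∉ T := by
    simp only [hT, Finset.mem_filter, Finset.mem_univ, true_and, hlast]
    show ¬ (n - d ≤ n - 1 ∧ n - 1 < n - 1)
    omega
  -- explicit enumeration of T
  set emb : Fin (d - 1) → Fin n := fun k => ⟨n - d + (k : ℕ), by omega⟩ with hemb
  have hembinj : Function.Injective emb := by
    intro a b hab
    have : n - d + (a : ℕ) = n - d + (b : ℕ) := congrArg Fin.val hab
    exact Fin.ext (by omega)
  have hTim : Finset.image emb Finset.univ = T := by
    ext i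
    simp only [Finset.mem_image, Finset.mem_univ, true_and, hT, Finset.mem_filter]
    constructor
    · rintro ⟨k, rfl⟩
      have hk := k.2
      show n - d ≤ n - d + (k : ℕ) ∧ n - d + (k : ℕ) < n - 1
      omega
    · rintro ⟨h1, h2⟩
      refine ⟨⟨(i : ℕ) - (n - d), by omega⟩, ?_⟩
      apply Fin.ext
      show n - d + ((i : ℕ) - (n - d)) = (i : ℕ)
      omega
  have hTcard : T.card = d - 1 := by
    rw [← hTim, Finset.card_image_of_injective _ hembinj, Finset.card_univ, Fintype.card_fin]
  have hTsum : ∑ j ∈ T, ℓ j = ∑ k : Fin (d - 1), ℓ (emb k) := by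
    rw [← hTim, Finset.sum_image (fun a _ b _ h => hembinj h)]
  -- key: any (d-1)-set avoiding `last` has sum at most the sum over T
  have key : ∀ J : Finset (Fin n), J.card = d - 1 → last ∉ J →
      ∑ j ∈ J, ℓ j ≤ ∑ j ∈ T, ℓ j := by
    intro J hJcard hJlast
    have hJlt : ∀ j ∈ J, (j : ℕ) < n - 1 := by
      intro j hj
      have hj2 := j.2
      by_contra h
      have : j = last := Fin.ext (by show (j : ℕ) = n - 1; omega)
      exact hJlast (this ▸ hj)
    set f := J.orderEmbOfFin hJcard with hf
    have hJim : Finset.image (fun k => f k) Finset.univ = J := by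
      ext j
      simp only [Finset.mem_image, Finset.mem_univ, true_and]
      rw [← Set.mem_range, Finset.range_orderEmbOfFin J hJcard, Finset.mem_coe]
    have hJsum : ∑ j ∈ J, ℓ j = ∑ k : Fin (d - 1), ℓ (f k) := by
      rw [← hJim, Finset.sum_image (fun a _ b _ h => f.injective h)]
    rw [hJsum, hTsum]
    apply Finset.sum_le_sum
    intro k _
    apply hord
    have hmono : StrictMono f := (J.orderEmbOfFin hJcard).strictMono
    have hfle : ∀ j : Fin (d - 1), (f j : ℕ) ≤ n - 2 := by
      intro j
      have := hJlt (f j) (Finset.orderEmbOfFin_mem J hJcard j)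
      omega
    set u : Fin (d - 1) → ℕ := fun j => n - 2 - (f j.rev : ℕ) with hu
    have humono : StrictMono u := by
      intro a b hab
      have h1 : f b.rev < f a.rev := hmono (by
        simp only [Fin.lt_def, Fin.val_rev]
        have ha := a.2; have hb := b.2
        have := (Fin.lt_def).1 hab
        omega)
      have h2 := hfle a.rev
      have h3 := hfle b.rev
      have h4 := (Fin.lt_def).1 h1
      show n - 2 - (f a.rev : ℕ) < n - 2 - (f b.rev : ℕ)
      omega
    have hb := strictMono_le_apply u humono k.rev
    simp only [hu, Fin.rev_rev, Fin.val_rev] at hb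
    have h2 := hfle k
    have hk := k.2
    rw [Fin.le_def]
    show (f k : ℕ) ≤ n - d + (k : ℕ)
    omega
  constructor
  · rintro ⟨i, hi⟩ hTlong
    by_cases hiT : i ∈ T
    · set T' := insert last (T.erase i) with hT'
      have hlastne : last ∉ T.erase i := fun h => hlast_notT (Finset.mem_of_mem_erase h)
      have hT'card : T'.card = d - 1 := by
        rw [hT', Finset.card_insert_of_notMem hlastne, Finset.card_erase_of_mem hiT, hTcard]
        omega
      have hile : ℓ i ≤ ℓ last := by
        apply hord
        have hi2 := i.2
        rw [Fin.le_def]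
        show (i : ℕ) ≤ n - 1
        omega
      have hT'sum : ∑ j ∈ T, ℓ j ≤ ∑ j ∈ T', ℓ j := by
        rw [hT', Finset.sum_insert hlastne, Finset.sum_erase_eq_sub hiT]
        linarith
      have hT'long : Long ℓ T' := by
        rw [long_iff] at hTlong ⊢
        linarith
      have hmem := hi T' hT'card hT'long
      rw [hT'] at hmem
      rcases Finset.mem_insert.1 hmem with h | h
      · rw [h] at hiT; exact hlast_notT hiT
      · exact (Finset.notMem_erase i T) h
    · exact hiT (hi T hTcard hTlong)
  · intro hTnotlong
    refine ⟨last, fun J hJcard hJlong => ?_⟩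
    by_contra hnotmem
    apply hTnotlong
    rw [long_iff] at hJlong ⊢
    have := key J hJcard hnotmem
    linarith
end
end

section
/- Let d ≥ 2, n ≥ d, and let ℓ ∈ ℝⁿ be an ordered generic length vector. Then ℓ is d-regular if and only if S_{n−d}(ℓ) = ∅, i.e. there is no ℓ-short subset of cardinality n−d+1 containing n. -/
noncomputable section

/-- For `d ≥ 2`, `n ≥ d` and an ordered generic length vector `ℓ ∈ ℝⁿ`,
`ℓ` is `d`-regular iff `S_{n-d}(ℓ) = ∅`, i.e. there is no `ℓ`-short subset of cardinality
`n-d+1` containing the last index. -/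
theorem stmt5 (d n : ℕ) (hd : 2 ≤ d) (hn : d ≤ n) (ℓ : Fin n → ℝ)
    (hpos : ∀ i, 0 < ℓ i) (hord : Monotone ℓ) (hgen : Generic ℓ) :
    DRegular d ℓ ↔ Sk n (by omega) (n - d) ℓ = ∅ := by
  have hn0 : 0 < n := by omega
  set N : Fin n := ⟨n - 1, Nat.sub_lt hn0 one_pos⟩ with hNdef
  constructor
  · rintro ⟨i, hi⟩
    rw [Set.eq_empty_iff_forall_notMem]
    rintro J ⟨hNJ, hcard, hshort⟩
    have hcardJ : J.card = n - d + 1 := by omega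
    have hcardJc : Jᶜ.card = d - 1 := by
      rw [Finset.card_compl, hcardJ]
      simp only [Fintype.card_fin]
      omega
    have hlongJc : Long ℓ Jᶜ := by
      unfold Long; rw [compl_compl]; exact hshort
    have hiJc : i ∈ Jᶜ := hi Jᶜ hcardJc hlongJc
    have hiJ : i ∉ J := Finset.mem_compl.mp hiJc
    have hiN : i ≠ N := fun h => hiJ (h ▸ hNJ)
    -- K = insert i (J.erase N)
    set K : Finset (Fin n) := insert i (J.erase N) with hK
    have hiK : i ∈ K := Finset.mem_insert_self _ _
    have hinotE : i ∉ J.erase N := fun h => hiJ (Finset.mem_of_mem_erase h)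
    have hsumK : ∑ j ∈ K, ℓ j = ℓ i + (∑ j ∈ J, ℓ j - ℓ N) := by
      rw [hK, Finset.sum_insert hinotE, Finset.sum_erase_eq_sub hNJ]
    have hcardK : K.card = J.card := by
      rw [hK, Finset.card_insert_of_notMem hinotE, Finset.card_erase_of_mem hNJ]
      omega
    have hle : ℓ i ≤ ℓ N := by
      apply hord
      have := i.isLt
      exact Fin.le_def.mpr (by simp [hNdef]; omega)
    have hT : ∀ S : Finset (Fin n), ∑ j ∈ S, ℓ j + ∑ j ∈ Sᶜ, ℓ j = ∑ j, ℓ j :=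
      fun S => Finset.sum_add_sum_compl S ℓ
    have hshortK : Short ℓ K := by
      unfold Short at *
      have h1 := hT J
      have h2 := hT K
      have : ∑ j ∈ K, ℓ j ≤ ∑ j ∈ J, ℓ j := by rw [hsumK]; linarith
      linarith
    have hlongKc : Long ℓ Kᶜ := by
      unfold Long; rw [compl_compl]; exact hshortK
    have hcardKc : Kᶜ.card = d - 1 := by
      rw [Finset.card_compl, hcardK, hcardJ]
      simp only [Fintype.card_fin]
      omega
    have := hi Kᶜ hcardKc hlongKc
    exact (Finset.mem_compl.mp this) hiK
  · intro h
    refine ⟨N, fun J hcard hlong => ?_⟩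
    by_contra hNJ
    have hmem : Jᶜ ∈ Sk n hn0 (n - d) ℓ := by
      refine ⟨Finset.mem_compl.mpr hNJ, ?_, hlong⟩
      rw [Finset.card_compl, hcard]
      simp only [Fintype.card_fin]
      omega
    rw [h] at hmem
    exact hmem
end
end

section
/- Let n ≥ 3 and let ℓ ∈ ℝⁿ be an ordered generic length vector that is not 3-regular, i.e. such that {n−2, n−1} is ℓ-long. Then a subset J ⊆ {1,…,n} is ℓ-short if and only if |J ∩ {n−2, n−1, n}| ≤ 1. In particular, any two ordered generic non-3-regular length vectors in ℝⁿ have exactly the same ℓ-short subsets, so there is only one chamber of non-3-regular generic length vectors up to permutation. -/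
noncomputable section

set_option maxHeartbeats 1000000 in
/-- Let `n ≥ 3` and let `ℓ ∈ ℝⁿ` be an ordered generic length vector which is
not `3`-regular, i.e. the set of the second and third largest indices `{n-2, n-1}` is `ℓ`-long.
Then a subset `J` is `ℓ`-short iff it contains at most one of the three largest indices
`{n-2, n-1, n}`. -/
theorem stmt7 (n : ℕ) (hn : 3 ≤ n) (ℓ : Fin n → ℝ)
    (hpos : ∀ i, 0 < ℓ i) (hord : Monotone ℓ) (hgen : Generic ℓ)
    (hnotreg : Long ℓ ({⟨n - 3, by omega⟩, ⟨n - 2, by omega⟩} : Finset (Fin n))) :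
    ∀ J : Finset (Fin n),
      Short ℓ J ↔ (J ∩ Finset.univ.filter fun i : Fin n => n - 3 ≤ (i : ℕ)).card ≤ 1 := by
  set a : Fin n := ⟨n - 3, by omega⟩ with ha
  set b : Fin n := ⟨n - 2, by omega⟩ with hb
  set c : Fin n := ⟨n - 1, by omega⟩ with hc
  set T : Finset (Fin n) := Finset.univ.filter fun i : Fin n => n - 3 ≤ (i : ℕ) with hT
  have hmemT : ∀ i : Fin n, i ∈ T ↔ n - 3 ≤ (i : ℕ) := by
    intro i; simp [hT]
  have hTeq : T = {a, b, c} := by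
    ext i
    have := i.isLt
    simp only [hmemT, Finset.mem_insert, Finset.mem_singleton, Fin.ext_iff]
    simp only [ha, hb, hc, Fin.val_mk] at *
    omega
  have hab : a ≠ b := by simp [Fin.ext_iff, ha, hb]; omega
  have hcardT : T.card = 3 := by
    rw [hTeq]
    rw [Finset.card_insert_of_notMem, Finset.card_insert_of_notMem, Finset.card_singleton]
    · simp [Fin.ext_iff, hb, hc]; omega
    · simp [Fin.ext_iff, ha, hb, hc]; omega
  -- the not-3-regular hypothesis, rewritten
  have habsum : ∑ j ∈ ({a, b} : Finset (Fin n))ᶜ, ℓ j < ℓ a + ℓ b := by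
    have := hnotreg
    simp only [Long, Short, compl_compl] at this
    rwa [Finset.sum_pair hab] at this
  have key : ∀ S : Finset (Fin n), 2 ≤ (S ∩ T).card → ∑ j ∈ Sᶜ, ℓ j < ∑ j ∈ S, ℓ j := by
    intro S hS
    obtain ⟨x, hx, y, hy, hxy⟩ := Finset.one_lt_card.mp (by omega : 1 < (S ∩ T).card)
    rw [Finset.mem_inter, hmemT] at hx hy
    -- ℓ a + ℓ b ≤ ℓ x + ℓ y
    have hxn := x.isLt; have hyn := y.isLt
    have hne : (x : ℕ) ≠ (y : ℕ) := fun h => hxy (Fin.ext h)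
    have h5 : ℓ a + ℓ b ≤ ℓ x + ℓ y := by
      rcases lt_or_gt_of_ne hne with h | h
      · have h1 : ℓ a ≤ ℓ x := hord (by simp [ha, Fin.le_def]; omega)
        have h2 : ℓ b ≤ ℓ y := hord (by simp [hb, Fin.le_def]; omega)
        linarith
      · have h1 : ℓ a ≤ ℓ y := hord (by simp [ha, Fin.le_def]; omega)
        have h2 : ℓ b ≤ ℓ x := hord (by simp [hb, Fin.le_def]; omega)
        linarith
    have hxyS : ({x, y} : Finset (Fin n)) ⊆ S := by
      intro z hz
      rcases Finset.mem_insert.mp hz with rfl | hz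
      · exact hx.1
      · rw [Finset.mem_singleton] at hz; subst hz; exact hy.1
    have h6 : ∑ j ∈ Sᶜ, ℓ j ≤ ∑ j ∈ ({x, y} : Finset (Fin n))ᶜ, ℓ j := by
      apply Finset.sum_le_sum_of_subset_of_nonneg
      · exact Finset.compl_subset_compl.mpr hxyS
      · exact fun i _ _ => (hpos i).le
    have h7 : ℓ x + ℓ y ≤ ∑ j ∈ S, ℓ j := by
      rw [← Finset.sum_pair hxy]
      exact Finset.sum_le_sum_of_subset_of_nonneg hxyS fun i _ _ => (hpos i).le
    have h1 : ∑ j ∈ ({x, y} : Finset (Fin n))ᶜ, ℓ j + ∑ j ∈ ({x, y} : Finset (Fin n)), ℓ j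
        = ∑ j, ℓ j := Finset.sum_compl_add_sum _ _
    have h3 : ∑ j ∈ ({a, b} : Finset (Fin n))ᶜ, ℓ j + ∑ j ∈ ({a, b} : Finset (Fin n)), ℓ j
        = ∑ j, ℓ j := Finset.sum_compl_add_sum _ _
    rw [Finset.sum_pair hxy] at h1
    rw [Finset.sum_pair hab] at h3
    linarith
  intro J
  constructor
  · intro hshort
    by_contra h
    have := key J (by omega)
    exact absurd hshort (by simpa [Short, not_lt] using this.le)
  · intro h
    have hpart : (J ∩ T).card + (Jᶜ ∩ T).card = 3 := by
      rw [← hcardT]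
      rw [← Finset.card_union_of_disjoint]
      · congr 1
        ext i; by_cases hi : i ∈ J <;> simp [hi]
      · apply Finset.disjoint_left.mpr
        intro i hi hi'
        exact (Finset.mem_compl.mp (Finset.mem_inter.mp hi').1) (Finset.mem_inter.mp hi).1
    have := key Jᶜ (by omega)
    rw [compl_compl] at this
    exact this
end
end

section
/- Let d ≥ 2, n ≥ d, and let ℓ ∈ ℝⁿ be an ordered, generic, d-regular length vector. Then for every subset J ⊆ {1,…,n−1} with |J| ≥ n−d, the set J ∪ {n} is ℓ-long. -/
noncomputable section

lemma long_mono {n : ℕ} {ℓ : Fin n → ℝ} {A B : Finset (Fin n)}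
    (h : ∑ j ∈ A, ℓ j ≤ ∑ j ∈ B, ℓ j) (hA : Long ℓ A) : Long ℓ B := by
  unfold Long Short at *
  rw [compl_compl] at *
  have h1 := Finset.sum_add_sum_compl A ℓ
  have h2 := Finset.sum_add_sum_compl B ℓ
  linarith

/-- Let `d ≥ 2`, `n ≥ d`, and let `ℓ ∈ ℝⁿ` be an ordered generic `d`-regular
length vector. Then for every subset `J` of the first `n-1` indices with `|J| ≥ n-d`,
the set `J ∪ {n}` is `ℓ`-long. -/
theorem stmt9 (d n : ℕ) (hd : 2 ≤ d) (hn : d ≤ n) (ℓ : Fin n → ℝ)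
    (hpos : ∀ i, 0 < ℓ i) (hord : Monotone ℓ) (hgen : Generic ℓ) (hreg : DRegular d ℓ)
    (J : Finset (Fin n)) (hJ : (⟨n - 1, by omega⟩ : Fin n) ∉ J) (hcard : n - d ≤ J.card) :
    Long ℓ (insert (⟨n - 1, by omega⟩ : Fin n) J) := by
  set last : Fin n := ⟨n - 1, by omega⟩ with hlast
  by_contra hcon
  have hshort : Short ℓ (insert last J) := (hgen (insert last J)).resolve_right hcon
  set K := (insert last J)ᶜ with hK
  have hKlong : Long ℓ K := by unfold Long; rwa [compl_compl]
  have hKcard : K.card ≤ d - 1 := by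
    have h1 : (insert last J).card = J.card + 1 := Finset.card_insert_of_notMem hJ
    have h2 : K.card = n - (insert last J).card := by
      rw [hK, Finset.card_compl, Fintype.card_fin]
    have h3 : J.card ≤ n := by
      have := Finset.card_le_univ J
      simpa [Fintype.card_fin] using this
    omega
  have hlastK : last ∉ K := by simp [hK]
  have hsub : K ⊆ {last}ᶜ := by
    intro x hx
    simp only [Finset.mem_compl, Finset.mem_singleton]
    intro h; subst h; exact hlastK hx
  have hcardc : d - 1 ≤ ({last}ᶜ : Finset (Fin n)).card := by
    rw [Finset.card_compl, Fintype.card_fin, Finset.card_singleton]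
    omega
  obtain ⟨K', hKK', hK'sub, hK'card⟩ :=
    Finset.exists_subsuperset_card_eq hsub hKcard hcardc
  have hK'long : Long ℓ K' :=
    long_mono (Finset.sum_le_sum_of_subset_of_nonneg hKK' (fun i _ _ => (hpos i).le)) hKlong
  obtain ⟨i, hi⟩ := hreg
  have hiK' : i ∈ K' := hi K' hK'card hK'long
  have hine : i ≠ last := by
    have := hK'sub hiK'
    simpa using this
  have hlastK' : last ∉ K' := by
    intro h
    have := hK'sub h
    simp at this
  set K'' := insert last (K'.erase i) with hK''
  have hlastE : last ∉ K'.erase i := fun h => hlastK' (Finset.mem_of_mem_erase h)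
  have hK''card : K''.card = d - 1 := by
    rw [hK'', Finset.card_insert_of_notMem hlastE, Finset.card_erase_of_mem hiK', hK'card]
    omega
  have hle : ℓ i ≤ ℓ last := by
    apply hord
    rw [Fin.le_def]
    have := i.isLt
    simp [hlast]
    omega
  have hsum : ∑ j ∈ K', ℓ j ≤ ∑ j ∈ K'', ℓ j := by
    rw [hK'', Finset.sum_insert hlastE, ← Finset.add_sum_erase _ _ hiK']
    linarith
  have hK''long : Long ℓ K'' := long_mono hsum hK'long
  have : i ∈ K'' := hi K'' hK''card hK''long
  rw [hK'', Finset.mem_insert] at this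
  rcases this with h | h
  · exact hine h
  · exact (Finset.notMem_erase i K') h
end
end

section
/- Let d ≥ 2, n ≥ 3, let ℓ ∈ ℝⁿ be a length vector, and fix j ∈ {1,…,n−1}. Then the map deleting the j-th coordinate restricts to a homeomorphism from {x ∈ C_d(ℓ) : x_j = e₁} onto C_d(ℓ^j_+), where ℓ^j_+ = (ℓ_1,…,ℓ̂_j,…,ℓ_{n−1}, ℓ_n + ℓ_j) ∈ ℝ^{n−1}. If moreover ℓ_j < ℓ_n, it also restricts to a homeomorphism from {x ∈ C_d(ℓ) : x_j = −e₁} onto C_d(ℓ^j_−), where ℓ^j_− = (ℓ_1,…,ℓ̂_j,…,ℓ_{n−1}, ℓ_n − ℓ_j) ∈ ℝ^{n−1}. -/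
noncomputable section

/-- The first standard basis vector `e₁` of `ℝ^d`. -/
def e1 (d : ℕ) : Euc d := if h : 0 < d then EuclideanSpace.single ⟨0, h⟩ 1 else 0

/-- The chain space `C_d(ℓ)` of a length vector `ℓ ∈ ℝ^{m+1}`: tuples `(x_1, …, x_m)` of unit
vectors in `ℝ^d` with `∑_{i=1}^{m} ℓ_i x_i = -ℓ_{m+1} e₁`. -/
def ChainSpace (d m : ℕ) (ℓ : Fin (m + 1) → ℝ) : Set (Fin m → Euc d) :=
  {x | (∀ i, ‖x i‖ = 1) ∧ ∑ i, ℓ i.castSucc • x i = (-ℓ (Fin.last m)) • e1 d}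

/-- The length vector `ℓ^j_+ = (ℓ_1, …, ℓ̂_j, …, ℓ_{n-1}, ℓ_n + ℓ_j) ∈ ℝ^{n-1}` for
`ℓ ∈ ℝ^n`, `n = m+3`. -/
def lvPlus (m : ℕ) (ℓ : Fin (m + 3) → ℝ) (j : Fin (m + 2)) : Fin (m + 2) → ℝ :=
  fun i => if (i : ℕ) = m + 1 then ℓ (Fin.last (m + 2)) + ℓ j.castSucc
    else if (i : ℕ) < (j : ℕ) then ℓ i.castSucc else ℓ i.succ

/-- The length vector `ℓ^j_- = (ℓ_1, …, ℓ̂_j, …, ℓ_{n-1}, ℓ_n - ℓ_j) ∈ ℝ^{n-1}` for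
`ℓ ∈ ℝ^n`, `n = m+3`. -/
def lvMinus (m : ℕ) (ℓ : Fin (m + 3) → ℝ) (j : Fin (m + 2)) : Fin (m + 2) → ℝ :=
  fun i => if (i : ℕ) = m + 1 then ℓ (Fin.last (m + 2)) - ℓ j.castSucc
    else if (i : ℕ) < (j : ℕ) then ℓ i.castSucc else ℓ i.succ

theorem chain_del (d m : ℕ) (ℓ : Fin (m + 3) → ℝ) (j : Fin (m + 2))
    (v : Euc d) (hv : ‖v‖ = 1) (ℓ' : Fin (m + 2) → ℝ)
    (h1 : ∀ i : Fin (m + 1), ℓ' i.castSucc = ℓ (j.succAbove i).castSucc)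
    (h2 : (-ℓ' (Fin.last (m + 1))) • e1 d
        = (-ℓ (Fin.last (m + 2))) • e1 d - ℓ j.castSucc • v) :
    ∃ H : {x : Fin (m + 2) → Euc d // x ∈ ChainSpace d (m + 2) ℓ ∧ x j = v} ≃ₜ
        ChainSpace d (m + 1) ℓ',
      ∀ x, (H x).val = fun i => x.val (j.succAbove i) := by
  have key : ∀ x : Fin (m + 2) → Euc d,
      ∑ i, ℓ i.castSucc • x i
        = ℓ j.castSucc • x j + ∑ i : Fin (m + 1), ℓ' i.castSucc • x (j.succAbove i) := by
    intro x
    rw [Fin.sum_univ_succAbove (fun i => ℓ i.castSucc • x i) j]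
    congr 1
    exact Finset.sum_congr rfl fun i _ => by rw [h1]
  refine ⟨{
    toFun := fun x => ⟨fun i => x.val (j.succAbove i), fun i => x.2.1.1 (j.succAbove i), ?_⟩
    invFun := fun y => ⟨Fin.insertNth (α := fun _ => Euc d) j v y.val, ⟨?_, ?_⟩, ?_⟩
    left_inv := ?_
    right_inv := ?_
    continuous_toFun := ?_
    continuous_invFun := ?_ }, fun x => rfl⟩
  · have hx := x.2.1.2
    rw [key x.val, x.2.2] at hx
    have : ∑ i : Fin (m + 1), ℓ' i.castSucc • x.val (j.succAbove i)
        = (-ℓ (Fin.last (m + 2))) • e1 d - ℓ j.castSucc • v := by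
      rw [← hx]; abel
    rw [this, ← h2]
  · intro i
    by_cases hi : i = j
    · subst hi; rw [Fin.insertNth_apply_same]; exact hv
    · obtain ⟨k, rfl⟩ := Fin.exists_succAbove_eq hi
      rw [Fin.insertNth_apply_succAbove]
      exact y.2.1 k
  · rw [key, Fin.insertNth_apply_same]
    have : ∑ i : Fin (m + 1), ℓ' i.castSucc • (Fin.insertNth (α := fun _ => Euc d) j v y.val) (j.succAbove i)
        = ∑ i, ℓ' i.castSucc • y.val i :=
      Finset.sum_congr rfl fun i _ => by rw [Fin.insertNth_apply_succAbove]
    rw [this, y.2.2, h2]; abel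
  · exact Fin.insertNth_apply_same (α := fun _ => Euc d) j v y.val
  · -- left_inv
    intro x
    apply Subtype.ext
    show Fin.insertNth (α := fun _ => Euc d) j v (fun i => x.val (j.succAbove i)) = x.val
    funext i
    by_cases hi : i = j
    · subst hi; rw [Fin.insertNth_apply_same, x.2.2]
    · obtain ⟨k, rfl⟩ := Fin.exists_succAbove_eq hi
      rw [Fin.insertNth_apply_succAbove]
  · intro y
    apply Subtype.ext
    ext i : 1
    exact Fin.insertNth_apply_succAbove (α := fun _ => Euc d) j v y.val i
  · refine Continuous.subtype_mk (continuous_pi fun i => ?_) _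
    exact (continuous_apply _).comp continuous_subtype_val
  · refine Continuous.subtype_mk (continuous_pi fun i => ?_) _
    by_cases hi : i = j
    · subst hi
      simpa [Fin.insertNth_apply_same] using continuous_const
    · obtain ⟨k, rfl⟩ := Fin.exists_succAbove_eq hi
      simp only [Fin.insertNth_apply_succAbove]
      exact
        (continuous_apply k).comp (continuous_subtype_val
          (p := fun y => y ∈ ChainSpace d (m + 1) ℓ'))

/-- Let `d ≥ 2`, `n = m + 3 ≥ 3`, let `ℓ ∈ ℝⁿ` be a length vector and
`j ∈ {1, …, n-1}`. Deleting the `j`-th coordinate restricts to a homeomorphism from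
`{x ∈ C_d(ℓ) : x_j = e₁}` onto `C_d(ℓ^j_+)`; and if `ℓ_j < ℓ_n`, it also restricts to a
homeomorphism from `{x ∈ C_d(ℓ) : x_j = -e₁}` onto `C_d(ℓ^j_-)`. -/
theorem stmt11 (d m : ℕ) (hd : 2 ≤ d) (ℓ : Fin (m + 3) → ℝ) (hpos : ∀ i, 0 < ℓ i)
    (j : Fin (m + 2)) :
    (∃ H : {x : Fin (m + 2) → Euc d // x ∈ ChainSpace d (m + 2) ℓ ∧ x j = e1 d} ≃ₜ
        ChainSpace d (m + 1) (lvPlus m ℓ j),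
      ∀ x, (H x).val = fun i => x.val (j.succAbove i)) ∧
    (ℓ j.castSucc < ℓ (Fin.last (m + 2)) →
      ∃ H : {x : Fin (m + 2) → Euc d // x ∈ ChainSpace d (m + 2) ℓ ∧ x j = -e1 d} ≃ₜ
        ChainSpace d (m + 1) (lvMinus m ℓ j),
      ∀ x, (H x).val = fun i => x.val (j.succAbove i)) := by
  have hd0 : 0 < d := by omega
  have he1 : ‖e1 d‖ = 1 := by
    rw [e1, dif_pos hd0]
    simp
  have h1p : ∀ i : Fin (m + 1), lvPlus m ℓ j i.castSucc = ℓ (j.succAbove i).castSucc := by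
    intro i
    have hi := i.isLt
    simp only [lvPlus, Fin.coe_castSucc]
    rw [if_neg (by omega : ¬ (i : ℕ) = m + 1)]
    by_cases h : (i : ℕ) < (j : ℕ)
    · rw [if_pos h, Fin.succAbove_of_castSucc_lt _ _ (by simpa [Fin.lt_def] using h)]
    · rw [if_neg h, Fin.succAbove_of_le_castSucc _ _ (by simp only [Fin.le_def, Fin.coe_castSucc]; omega), Fin.succ_castSucc]
  have h1m : ∀ i : Fin (m + 1), lvMinus m ℓ j i.castSucc = ℓ (j.succAbove i).castSucc := by
    intro i
    have hi := i.isLt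
    simp only [lvMinus, Fin.coe_castSucc]
    rw [if_neg (by omega : ¬ (i : ℕ) = m + 1)]
    by_cases h : (i : ℕ) < (j : ℕ)
    · rw [if_pos h, Fin.succAbove_of_castSucc_lt _ _ (by simpa [Fin.lt_def] using h)]
    · rw [if_neg h, Fin.succAbove_of_le_castSucc _ _ (by simp only [Fin.le_def, Fin.coe_castSucc]; omega), Fin.succ_castSucc]
  have hlp : lvPlus m ℓ j (Fin.last (m + 1)) = ℓ (Fin.last (m + 2)) + ℓ j.castSucc := by
    simp [lvPlus]
  have hlm : lvMinus m ℓ j (Fin.last (m + 1)) = ℓ (Fin.last (m + 2)) - ℓ j.castSucc := by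
    simp [lvMinus]
  constructor
  · exact chain_del d m ℓ j (e1 d) he1 (lvPlus m ℓ j) h1p (by rw [hlp]; module)
  · intro _
    exact chain_del d m ℓ j (-e1 d) (by rw [norm_neg, he1]) (lvMinus m ℓ j) h1m
      (by rw [hlm]; module)
end
end

section
/- Let ℓ ∈ ℝⁿ be a length vector and let 2 ≤ k < d. The map induced by the standard inclusion ℝ^k ⊆ ℝ^d sends N_k(ℓ) = {x ∈ (S^{k−1})ⁿ : Σ ℓ_i x_i = 0}/O(k) to M_d(ℓ) = {x ∈ (S^{d−1})ⁿ : Σ ℓ_i x_i = 0}/SO(d) well-definedly and injectively, and its image is exactly the set of points of M_d(ℓ) of rank at most k. -/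
noncomputable section

/-- Configurations: `n`-tuples of unit vectors in `ℝ^d` with `∑ ℓᵢ xᵢ = 0`. -/
def PolygonConfig (d n : ℕ) (ℓ : Fin n → ℝ) : Set (Fin n → Euc d) :=
  {x | (∀ i, ‖x i‖ = 1) ∧ ∑ i, ℓ i • x i = 0}

/-- A linear isometry of `ℝ^d` belongs to `SO(d)` iff it has determinant one. -/
def IsSO {d : ℕ} (A : Euc d ≃ₗᵢ[ℝ] Euc d) : Prop :=
  LinearMap.det (A.toLinearEquiv : Euc d →ₗ[ℝ] Euc d) = 1

/-- Two configurations are identified in the moduli space iff they differ by the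
diagonal action of `SO(d)`. -/
def ModuliRel (d n : ℕ) (ℓ : Fin n → ℝ) (x y : PolygonConfig d n ℓ) : Prop :=
  ∃ A : Euc d ≃ₗᵢ[ℝ] Euc d, IsSO A ∧ ∀ i, A (x.val i) = y.val i

/-- The moduli space `M_d(ℓ)`, with the quotient topology. -/
abbrev ModuliSpace (d n : ℕ) (ℓ : Fin n → ℝ) : Type := Quot (ModuliRel d n ℓ)

/-- Two configurations are identified in `N_k(ℓ)` iff they differ by the diagonal action of
the full orthogonal group `O(k)` (an arbitrary linear isometry). -/
def NRel (k n : ℕ) (ℓ : Fin n → ℝ) (x y : PolygonConfig k n ℓ) : Prop :=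
  ∃ A : Euc k ≃ₗᵢ[ℝ] Euc k, ∀ i, A (x.val i) = y.val i

/-- The space `N_k(ℓ)`, the quotient of the configurations in `ℝ^k` by `O(k)`. -/
abbrev NSpace (k n : ℕ) (ℓ : Fin n → ℝ) : Type := Quot (NRel k n ℓ)

/-- The standard inclusion `ℝ^k ⊆ ℝ^d` as the first `k` coordinates. -/
def inclEuc (k d : ℕ) : Euc k → Euc d :=
  fun v => (WithLp.equiv 2 (Fin d → ℝ)).symm
    (fun i : Fin d => if h : (i : ℕ) < k then v ⟨i, h⟩ else 0)

/-- The rank of a configuration: the dimension of the span of its vectors. -/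
def configRank (d n : ℕ) (x : Fin n → Euc d) : ℕ :=
  Module.finrank ℝ (Submodule.span ℝ (Set.range x))

namespace Stmt14Aux

open Module Submodule Finset

lemma inclEuc_apply (k d : ℕ) (v : Euc k) (i : Fin d) :
    inclEuc k d v i = if h : (i : ℕ) < k then v ⟨i, h⟩ else 0 := rfl

def inclLM (k d : ℕ) : Euc k →ₗ[ℝ] Euc d where
  toFun := inclEuc k d
  map_add' x y := by
    apply PiLp.ext; intro i
    simp only [inclEuc_apply, PiLp.add_apply]
    split <;> simp
  map_smul' c x := by
    apply PiLp.ext; intro i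
    simp only [inclEuc_apply, PiLp.smul_apply, RingHom.id_apply]
    split <;> simp

@[simp] lemma inclLM_apply (k d : ℕ) (v : Euc k) : inclLM k d v = inclEuc k d v := rfl

lemma sum_eq_castLE {k d : ℕ} (h : k ≤ d) (f : Fin d → ℝ)
    (hf : ∀ i : Fin d, k ≤ (i : ℕ) → f i = 0) :
    ∑ i, f i = ∑ j : Fin k, f (Fin.castLE h j) := by
  have h1 : ∑ j : Fin k, f (Fin.castLE h j)
      = ∑ i ∈ Finset.univ.map (Fin.castLEEmb h), f i := by
    rw [Finset.sum_map]
    simp [Fin.coe_castLEEmb]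
  rw [h1]
  symm
  apply Finset.sum_subset (Finset.subset_univ _)
  intro i _ hi
  apply hf
  by_contra hlt
  push_neg at hlt
  exact hi (Finset.mem_map.mpr ⟨⟨(i : ℕ), hlt⟩, Finset.mem_univ _, Fin.ext rfl⟩)

lemma norm_inclEuc {k d : ℕ} (h : k ≤ d) (v : Euc k) : ‖inclEuc k d v‖ = ‖v‖ := by
  rw [EuclideanSpace.norm_eq, EuclideanSpace.norm_eq]
  congr 1
  rw [sum_eq_castLE h]
  · apply Finset.sum_congr rfl
    intro j _
    rw [inclEuc_apply, dif_pos (by exact j.2)]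
    exact congrArg (fun t => ‖v t‖ ^ 2) (Fin.ext rfl)
  · intro i hi
    rw [inclEuc_apply, dif_neg (by omega)]
    simp

def inclLI {k d : ℕ} (h : k ≤ d) : Euc k →ₗᵢ[ℝ] Euc d :=
  ⟨inclLM k d, norm_inclEuc h⟩

@[simp] lemma inclLI_apply {k d : ℕ} (h : k ≤ d) (v : Euc k) :
    inclLI h v = inclEuc k d v := rfl

def truncLM {k d : ℕ} (h : k ≤ d) : Euc d →ₗ[ℝ] Euc k where
  toFun w := (WithLp.equiv 2 (Fin k → ℝ)).symm fun j => w (Fin.castLE h j)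
  map_add' x y := by apply PiLp.ext; intro j; simp [PiLp.add_apply]
  map_smul' c x := by apply PiLp.ext; intro j; simp [PiLp.smul_apply]

@[simp] lemma truncLM_apply {k d : ℕ} (h : k ≤ d) (w : Euc d) (j : Fin k) :
    truncLM h w j = w (Fin.castLE h j) := rfl

lemma trunc_incl {k d : ℕ} (h : k ≤ d) (v : Euc k) : truncLM h (inclEuc k d v) = v := by
  apply PiLp.ext; intro j
  rw [truncLM_apply, inclEuc_apply, dif_pos (by exact j.2)]
  exact congrArg v (Fin.ext rfl)

lemma incl_trunc_of_mem {k d : ℕ} (h : k ≤ d) {w : Euc d}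
    (hw : w ∈ LinearMap.range (inclLM k d)) : inclEuc k d (truncLM h w) = w := by
  obtain ⟨u, rfl⟩ := hw
  rw [inclLM_apply, trunc_incl]

lemma incl_trunc_of_coords {k d : ℕ} (h : k ≤ d) {w : Euc d}
    (hw : ∀ i : Fin d, k ≤ (i : ℕ) → w i = 0) : inclEuc k d (truncLM h w) = w := by
  apply PiLp.ext; intro i
  rw [inclEuc_apply]
  split
  · rfl
  · exact (hw i (by omega)).symm

lemma coords_of_mem_range {k d : ℕ} {w : Euc d}
    (hw : w ∈ LinearMap.range (inclLM k d)) (i : Fin d) (hi : k ≤ (i : ℕ)) : w i = 0 := by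
  obtain ⟨u, rfl⟩ := hw
  rw [inclLM_apply, inclEuc_apply, dif_neg (by omega)]

end Stmt14Aux
namespace Stmt14Aux

def reflLM (d : ℕ) (j : Fin d) : Euc d →ₗ[ℝ] Euc d where
  toFun w := (WithLp.equiv 2 (Fin d → ℝ)).symm fun i => if i = j then -(w i) else w i
  map_add' x y := by
    apply PiLp.ext; intro i
    simp only [WithLp.equiv_symm_apply, PiLp.toLp_apply, PiLp.add_apply]
    split <;> ring
  map_smul' c x := by
    apply PiLp.ext; intro i
    simp only [WithLp.equiv_symm_apply, PiLp.toLp_apply, PiLp.smul_apply, RingHom.id_apply, smul_eq_mul]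
    split <;> ring

@[simp] lemma reflLM_apply (d : ℕ) (j : Fin d) (w : Euc d) (i : Fin d) :
    reflLM d j w i = if i = j then -(w i) else w i := rfl

lemma reflLM_invol (d : ℕ) (j : Fin d) (w : Euc d) : reflLM d j (reflLM d j w) = w := by
  apply PiLp.ext; intro i
  simp only [reflLM_apply]
  split <;> simp

def reflCoord (d : ℕ) (j : Fin d) : Euc d ≃ₗᵢ[ℝ] Euc d where
  toLinearEquiv :=
    { reflLM d j with
      invFun := reflLM d j
      left_inv := reflLM_invol d j
      right_inv := reflLM_invol d j }
  norm_map' w := by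
    rw [EuclideanSpace.norm_eq, EuclideanSpace.norm_eq]
    congr 1
    apply Finset.sum_congr rfl
    intro i _
    show ‖reflLM d j w i‖ ^ 2 = _
    rw [reflLM_apply]
    split <;> simp

@[simp] lemma reflCoord_apply (d : ℕ) (j : Fin d) (w : Euc d) (i : Fin d) :
    reflCoord d j w i = if i = j then -(w i) else w i := rfl

lemma reflCoord_apply_of_zero (d : ℕ) (j : Fin d) (w : Euc d) (hw : w j = 0) :
    reflCoord d j w = w := by
  apply PiLp.ext; intro i
  rw [reflCoord_apply]
  split
  · rename_i h; subst h; simp [hw]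
  · rfl

lemma det_reflCoord (d : ℕ) (j : Fin d) :
    LinearMap.det ((reflCoord d j).toLinearEquiv : Euc d →ₗ[ℝ] Euc d) = -1 := by
  classical
  let b := (EuclideanSpace.basisFun (Fin d) ℝ).toBasis
  rw [← LinearMap.det_toMatrix b]
  have hM : LinearMap.toMatrix b b ((reflCoord d j).toLinearEquiv : Euc d →ₗ[ℝ] Euc d)
      = Matrix.diagonal (fun i => if i = j then (-1 : ℝ) else 1) := by
    ext i i'
    rw [LinearMap.toMatrix_apply]
    have hb : b i' = EuclideanSpace.single i' (1:ℝ) := by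
      simp [b, EuclideanSpace.basisFun_apply]
    rw [hb]
    have hrepr : ∀ w : Euc d, b.repr w i = w i := fun w => rfl
    rw [hrepr]
    show reflCoord d j (EuclideanSpace.single i' (1:ℝ)) i = _
    rw [reflCoord_apply]
    rw [EuclideanSpace.single_apply]
    by_cases h1 : i = j <;> by_cases h2 : i = i' <;>
      simp [Matrix.diagonal_apply, h1, h2] <;> split <;> norm_num
  rw [hM, Matrix.det_diagonal]
  rw [Finset.prod_eq_single j (fun i _ hij => by simp [hij]) (by simp)]
  simp

lemma det_isometryEquiv_pm {E : Type*} [NormedAddCommGroup E] [InnerProductSpace ℝ E]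
    [FiniteDimensional ℝ E] (f : E ≃ₗᵢ[ℝ] E) :
    LinearMap.det (f.toLinearEquiv : E →ₗ[ℝ] E) = 1 ∨
      LinearMap.det (f.toLinearEquiv : E →ₗ[ℝ] E) = -1 := by
  let a := stdOrthonormalBasis ℝ E
  let b := a.map f
  have h1 := a.det_to_matrix_orthonormalBasis_real b
  have h2 : a.toBasis.det ⇑b = LinearMap.det (f.toLinearEquiv : E →ₗ[ℝ] E) := by
    have hb : ⇑b = (f.toLinearEquiv : E →ₗ[ℝ] E) ∘ ⇑a.toBasis := by
      funext i
      simp [b, OrthonormalBasis.map_apply, a.coe_toBasis]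
    rw [hb, Module.Basis.det_comp, Module.Basis.det_self, mul_one]
  rwa [h2] at h1

lemma det_trans {m : ℕ} (A B : Euc m ≃ₗᵢ[ℝ] Euc m) :
    LinearMap.det ((A.trans B).toLinearEquiv : Euc m →ₗ[ℝ] Euc m)
      = LinearMap.det ((B.toLinearEquiv : Euc m →ₗ[ℝ] Euc m))
        * LinearMap.det ((A.toLinearEquiv : Euc m →ₗ[ℝ] Euc m)) := by
  have h : ((A.trans B).toLinearEquiv : Euc m →ₗ[ℝ] Euc m)
      = (B.toLinearEquiv : Euc m →ₗ[ℝ] Euc m) ∘ₗ (A.toLinearEquiv : Euc m →ₗ[ℝ] Euc m) :=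
    LinearMap.ext fun w => rfl
  rw [h, LinearMap.det_comp]

lemma isSO_refl (d : ℕ) : IsSO (LinearIsometryEquiv.refl ℝ (Euc d)) := by
  have h : ((LinearIsometryEquiv.refl ℝ (Euc d)).toLinearEquiv : Euc d →ₗ[ℝ] Euc d)
      = LinearMap.id := LinearMap.ext fun w => rfl
  unfold IsSO
  rw [h, LinearMap.det_id]

lemma isSO_symm {d : ℕ} {A : Euc d ≃ₗᵢ[ℝ] Euc d} (hA : IsSO A) : IsSO A.symm := by
  have h := det_trans A A.symm
  rw [LinearIsometryEquiv.self_trans_symm] at h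
  have h0 := isSO_refl d
  unfold IsSO at *
  rw [h0, hA, mul_one] at h
  exact h.symm

lemma isSO_trans {d : ℕ} {A B : Euc d ≃ₗᵢ[ℝ] Euc d} (hA : IsSO A) (hB : IsSO B) :
    IsSO (A.trans B) := by
  unfold IsSO at *
  rw [det_trans, hA, hB, mul_one]

lemma exists_isSO_agree {k d : ℕ} (hkd : k < d) (A : Euc d ≃ₗᵢ[ℝ] Euc d) :
    ∃ B : Euc d ≃ₗᵢ[ℝ] Euc d, IsSO B ∧
      ∀ w : Euc d, A w ∈ LinearMap.range (inclLM k d) → B w = A w := by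
  rcases det_isometryEquiv_pm A with h | h
  · exact ⟨A, h, fun _ _ => rfl⟩
  · refine ⟨A.trans (reflCoord d ⟨k, hkd⟩), ?_, ?_⟩
    · unfold IsSO
      rw [det_trans, det_reflCoord, h]
      norm_num
    · intro w hw
      show reflCoord d ⟨k, hkd⟩ (A w) = A w
      exact reflCoord_apply_of_zero d _ _ (coords_of_mem_range hw ⟨k, hkd⟩ (le_refl k))

end Stmt14Aux
namespace Stmt14Aux

open Module Submodule

lemma nrel_equivalence (k n : ℕ) (ℓ : Fin n → ℝ) : Equivalence (NRel k n ℓ) where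
  refl x := ⟨LinearIsometryEquiv.refl ℝ _, fun i => rfl⟩
  symm := fun {x y} h => by
    obtain ⟨A, hA⟩ := h
    exact ⟨A.symm, fun i => by rw [← hA i]; exact A.symm_apply_apply _⟩
  trans := fun {x y z} h h' => by
    obtain ⟨A, hA⟩ := h
    obtain ⟨B, hB⟩ := h'
    exact ⟨A.trans B, fun i => by show B (A _) = _; rw [hA i, hB i]⟩

lemma mrel_equivalence (d n : ℕ) (ℓ : Fin n → ℝ) : Equivalence (ModuliRel d n ℓ) where
  refl x := ⟨LinearIsometryEquiv.refl ℝ _, isSO_refl d, fun i => rfl⟩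
  symm := fun {x y} h => by
    obtain ⟨A, hSO, hA⟩ := h
    exact ⟨A.symm, isSO_symm hSO, fun i => by rw [← hA i]; exact A.symm_apply_apply _⟩
  trans := fun {x y z} h h' => by
    obtain ⟨A, hA, h1⟩ := h
    obtain ⟨B, hB, h2⟩ := h'
    exact ⟨A.trans B, isSO_trans hA hB, fun i => by show B (A _) = _; rw [h1 i, h2 i]⟩

lemma config_map {a b n : ℕ} {ℓ : Fin n → ℝ} (f : Euc a →ₗᵢ[ℝ] Euc b)
    {x : Fin n → Euc a} (hx : x ∈ PolygonConfig a n ℓ) :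
    (fun i => f (x i)) ∈ PolygonConfig b n ℓ := by
  constructor
  · intro i; rw [f.norm_map]; exact hx.1 i
  · have h : ∑ i, ℓ i • f (x i) = f (∑ i, ℓ i • x i) := by
      rw [map_sum]
      exact Finset.sum_congr rfl fun i _ => (map_smul f (ℓ i) (x i)).symm
    rw [h, hx.2, map_zero]

lemma exists_extendO {k d : ℕ} (hkd : k ≤ d) (A : Euc k ≃ₗᵢ[ℝ] Euc k) :
    ∃ B : Euc d ≃ₗᵢ[ℝ] Euc d, ∀ v : Euc k, B (inclEuc k d v) = inclEuc k d (A v) := by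
  set S : Submodule ℝ (Euc d) := LinearMap.range (inclLM k d) with hS
  let L0 : Euc d →ₗ[ℝ] Euc d :=
    (inclLM k d) ∘ₗ (A.toLinearEquiv : Euc k →ₗ[ℝ] Euc k) ∘ₗ (truncLM hkd)
  have hnorm : ∀ s : S, ‖(L0 ∘ₗ S.subtype) s‖ = ‖(s : Euc d)‖ := by
    intro s
    show ‖inclEuc k d (A (truncLM hkd (s : Euc d)))‖ = _
    rw [norm_inclEuc hkd, A.norm_map, ← norm_inclEuc hkd (truncLM hkd (s : Euc d)),
      incl_trunc_of_mem hkd s.2]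
  let L : S →ₗᵢ[ℝ] Euc d := ⟨L0 ∘ₗ S.subtype, hnorm⟩
  have hsurj : Function.Surjective L.extend :=
    LinearMap.injective_iff_surjective.mp L.extend.injective
  refine ⟨LinearIsometryEquiv.ofSurjective L.extend hsurj, fun v => ?_⟩
  have hv : inclEuc k d v ∈ S := ⟨v, rfl⟩
  have h1 : (LinearIsometryEquiv.ofSurjective L.extend hsurj) (inclEuc k d v)
      = L.extend (inclEuc k d v) := by
    rw [LinearIsometryEquiv.coe_ofSurjective]
  rw [h1]
  have h2 : L.extend (inclEuc k d v) = L ⟨inclEuc k d v, hv⟩ :=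
    L.extend_apply ⟨inclEuc k d v, hv⟩
  rw [h2]
  show inclEuc k d (A (truncLM hkd (inclEuc k d v))) = _
  rw [trunc_incl]

lemma nrel_of_isometry_incl {k d n : ℕ} (hkd : k ≤ d)
    (x y : Fin n → Euc k)
    (A : Euc d ≃ₗᵢ[ℝ] Euc d) (hA : ∀ i, A (inclEuc k d (x i)) = inclEuc k d (y i)) :
    ∃ B : Euc k ≃ₗᵢ[ℝ] Euc k, ∀ i, B (x i) = y i := by
  set S : Submodule ℝ (Euc k) := Submodule.span ℝ (Set.range x) with hS
  let T : Euc k →ₗ[ℝ] Euc d := (A.toLinearEquiv : Euc d →ₗ[ℝ] Euc d) ∘ₗ inclLM k d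
  have hT : ∀ i, T (x i) = inclEuc k d (y i) := fun i => hA i
  have hrange : ∀ v ∈ S, T v ∈ LinearMap.range (inclLM k d) := by
    intro v hv
    have h1 : T v ∈ Submodule.map T S := Submodule.mem_map_of_mem hv
    have h2 : Submodule.map T S ≤ LinearMap.range (inclLM k d) := by
      rw [hS, Submodule.map_span, Submodule.span_le]
      rintro w ⟨u, ⟨i, rfl⟩, rfl⟩
      exact ⟨y i, (hT i).symm⟩
    exact h2 h1
  let L0 : Euc k →ₗ[ℝ] Euc k := truncLM hkd ∘ₗ T
  have hnorm : ∀ s : S, ‖(L0 ∘ₗ S.subtype) s‖ = ‖(s : Euc k)‖ := by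
    intro s
    have h3 := hrange (s : Euc k) s.2
    show ‖truncLM hkd (T (s : Euc k))‖ = _
    rw [← norm_inclEuc hkd, incl_trunc_of_mem hkd h3]
    show ‖A (inclEuc k d (s : Euc k))‖ = _
    rw [A.norm_map, norm_inclEuc hkd]
  let L : S →ₗᵢ[ℝ] Euc k := ⟨L0 ∘ₗ S.subtype, hnorm⟩
  have hsurj : Function.Surjective L.extend :=
    LinearMap.injective_iff_surjective.mp L.extend.injective
  refine ⟨LinearIsometryEquiv.ofSurjective L.extend hsurj, fun i => ?_⟩
  have hxi : x i ∈ S := Submodule.subset_span ⟨i, rfl⟩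
  have h1 : (LinearIsometryEquiv.ofSurjective L.extend hsurj) (x i)
      = L.extend (x i) := by rw [LinearIsometryEquiv.coe_ofSurjective]
  rw [h1]
  have h2 : L.extend (x i) = L ⟨x i, hxi⟩ := L.extend_apply ⟨x i, hxi⟩
  rw [h2]
  show truncLM hkd (T (x i)) = y i
  rw [hT i, trunc_incl]

lemma rank_incl_le {k d n : ℕ} (hkd : k ≤ d) (x : Fin n → Euc k) :
    configRank d n (fun i => inclEuc k d (x i)) ≤ k := by
  unfold configRank
  have h1 : Submodule.span ℝ (Set.range fun i => inclEuc k d (x i))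
      ≤ LinearMap.range (inclLM k d) := by
    rw [Submodule.span_le]; rintro w ⟨i, rfl⟩; exact ⟨x i, rfl⟩
  calc finrank ℝ (Submodule.span ℝ (Set.range fun i => inclEuc k d (x i)))
      ≤ finrank ℝ (LinearMap.range (inclLM k d)) := Submodule.finrank_mono h1
    _ = finrank ℝ (Euc k) := LinearMap.finrank_range_of_inj (inclLI hkd).injective
    _ = k := finrank_euclideanSpace_fin

end Stmt14Aux
namespace Stmt14Aux

open Module Submodule

lemma exists_isometry_to_incl {k d n : ℕ} (hkd : k < d) (z : Fin n → Euc d)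
    (hz : configRank d n z ≤ k) :
    ∃ A : Euc d ≃ₗᵢ[ℝ] Euc d, ∀ j, A (z j) ∈ LinearMap.range (inclLM k d) := by
  classical
  set S : Submodule ℝ (Euc d) := Submodule.span ℝ (Set.range z) with hS
  have hmk : finrank ℝ S ≤ k := hz
  let c := stdOrthonormalBasis ℝ S
  let v : Fin d → Euc d :=
    fun i => if h : (i : ℕ) < finrank ℝ S then (c ⟨(i : ℕ), h⟩ : Euc d) else 0
  set s : Set (Fin d) := {i : Fin d | (i : ℕ) < finrank ℝ S} with hs
  have hvs : ∀ i : Fin d, (hi : i ∈ s) → v i = (c ⟨(i : ℕ), hi⟩ : Euc d) := by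
    intro i hi
    exact dif_pos hi
  have horth : Orthonormal ℝ (s.restrict v) := by
    constructor
    · rintro ⟨i, hi⟩
      show ‖v i‖ = 1
      rw [hvs i hi, ← Submodule.coe_norm]
      exact c.orthonormal.1 _
    · rintro ⟨i, hi⟩ ⟨i', hi'⟩ hne
      show (inner ℝ (v i) (v i') : ℝ) = 0
      rw [hvs i hi, hvs i' hi', ← Submodule.coe_inner]
      refine c.orthonormal.2 fun hcon => hne ?_
      have h1 := congrArg (Fin.val) hcon
      exact Subtype.ext (Fin.ext h1)
  have hcard : finrank ℝ (Euc d) = Fintype.card (Fin d) := by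
    simp [finrank_euclideanSpace_fin]
  obtain ⟨b, hb⟩ := horth.exists_orthonormalBasis_extension_of_card_eq hcard
  have hSspan : S = Submodule.span ℝ (Set.range fun t => (c t : Euc d)) := by
    conv_lhs => rw [← Submodule.map_subtype_top S]
    rw [← c.toBasis.span_eq, Submodule.map_span, ← Set.range_comp]
    congr 1
  have hborth : ∀ i : Fin d, finrank ℝ S ≤ (i : ℕ) → b i ∈ Sᗮ := by
    intro i hi
    rw [Submodule.mem_orthogonal]
    intro u hu
    rw [hSspan] at hu
    induction hu using Submodule.span_induction with
    | mem u hu =>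
      obtain ⟨t, rfl⟩ := hu
      have htd : (t : ℕ) < d := lt_of_lt_of_le t.2 (le_of_lt (lt_of_le_of_lt hmk hkd))
      have hts : (⟨(t : ℕ), htd⟩ : Fin d) ∈ s := t.2
      have hbt : b ⟨(t : ℕ), htd⟩ = (c t : Euc d) := by
        rw [hb _ hts, hvs _ hts]
      have hne2 : (⟨(t : ℕ), htd⟩ : Fin d) ≠ i := by
        intro hcon
        have h6 : (t : ℕ) = (i : ℕ) := congrArg Fin.val hcon
        omega
      have h7 := b.orthonormal.2 hne2
      show (inner ℝ ((c t : Euc d)) (b i) : ℝ) = 0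
      rw [← hbt]
      exact h7
    | zero => exact inner_zero_left _
    | add u w hu hw h1 h2 => rw [inner_add_left, h1, h2, add_zero]
    | smul a u hu h1 => rw [real_inner_smul_left, h1, mul_zero]
  refine ⟨b.repr, fun j => ?_⟩
  have hzj : z j ∈ S := Submodule.subset_span ⟨j, rfl⟩
  have hcoord : ∀ i : Fin d, k ≤ (i : ℕ) → b.repr (z j) i = 0 := by
    intro i hi
    rw [b.repr_apply_apply]
    have h4 : b i ∈ Sᗮ := hborth i (le_trans hmk hi)
    have h5 := (Submodule.mem_orthogonal S (b i)).mp h4 (z j) hzj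
    rw [real_inner_comm]
    exact h5
  exact ⟨truncLM (le_of_lt hkd) (b.repr (z j)), incl_trunc_of_coords (le_of_lt hkd) hcoord⟩

end Stmt14Aux
open Stmt14Aux

/-- For `2 ≤ k < d`, the standard inclusion `ℝ^k ⊆ ℝ^d` sends
configurations to configurations, and induces a well-defined injective map
`N_k(ℓ) → M_d(ℓ)` whose image is exactly the set of points of rank at most `k`. -/
theorem stmt14 (k d n : ℕ) (hk : 2 ≤ k) (hkd : k < d) (ℓ : Fin n → ℝ)
    (hpos : ∀ i, 0 < ℓ i) :
    (∀ x ∈ PolygonConfig k n ℓ, (fun i => inclEuc k d (x i)) ∈ PolygonConfig d n ℓ) ∧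
    ∃ Φ : NSpace k n ℓ → ModuliSpace d n ℓ,
      (∀ (x : PolygonConfig k n ℓ) (y : PolygonConfig d n ℓ),
        (∀ i, y.val i = inclEuc k d (x.val i)) →
          Φ (Quot.mk _ x) = Quot.mk _ y) ∧
      Function.Injective Φ ∧
      Set.range Φ = {p | ∃ z : PolygonConfig d n ℓ,
        Quot.mk _ z = p ∧ configRank d n z.val ≤ k} := by
  have hkd' : k ≤ d := le_of_lt hkd
  have hincl : ∀ x ∈ PolygonConfig k n ℓ, (fun i => inclEuc k d (x i)) ∈ PolygonConfig d n ℓ :=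
    fun x hx => config_map (inclLI hkd') hx
  refine ⟨hincl, ?_⟩
  let F : PolygonConfig k n ℓ → ModuliSpace d n ℓ :=
    fun x => Quot.mk _ ⟨fun i => inclEuc k d (x.val i), hincl x.val x.2⟩
  have hwd : ∀ x y : PolygonConfig k n ℓ, NRel k n ℓ x y → F x = F y := by
    intro x y h
    obtain ⟨A, hA⟩ := h
    obtain ⟨B, hB⟩ := exists_extendO hkd' A
    obtain ⟨C, hC, hCB⟩ := exists_isSO_agree hkd B
    apply Quot.sound
    refine ⟨C, hC, fun i => ?_⟩
    show C (inclEuc k d (x.val i)) = inclEuc k d (y.val i)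
    have h1 : B (inclEuc k d (x.val i)) = inclEuc k d (A (x.val i)) := hB _
    have h2 : B (inclEuc k d (x.val i)) ∈ LinearMap.range (inclLM k d) := by
      rw [h1]; exact ⟨A (x.val i), rfl⟩
    rw [hCB _ h2, h1, hA i]
  refine ⟨Quot.lift F hwd, ?_, ?_, ?_⟩
  · intro x y hy
    have hxy : y = ⟨fun i => inclEuc k d (x.val i), hincl x.val x.2⟩ := Subtype.ext (funext hy)
    rw [hxy]
  · intro p q
    induction p using Quot.ind with | _ x => ?_
    induction q using Quot.ind with | _ y => ?_
    intro h
    have h1 : F x = F y := h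
    have h2 : Relation.EqvGen (ModuliRel d n ℓ)
        ⟨fun i => inclEuc k d (x.val i), hincl x.val x.2⟩
        ⟨fun i => inclEuc k d (y.val i), hincl y.val y.2⟩ := Quot.eq.mp h1
    have h3 := ((mrel_equivalence d n ℓ).eqvGen_iff).mp h2
    obtain ⟨A, hSO, hA⟩ := h3
    obtain ⟨B, hB⟩ := nrel_of_isometry_incl hkd' x.val y.val A hA
    exact Quot.sound ⟨B, hB⟩
  · ext p
    constructor
    · rintro ⟨q, rfl⟩
      induction q using Quot.ind with | _ x => ?_
      refine ⟨⟨fun i => inclEuc k d (x.val i), hincl x.val x.2⟩, rfl, ?_⟩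
      exact rank_incl_le hkd' x.val
    · rintro ⟨z, rfl, hzr⟩
      obtain ⟨A, hA⟩ := exists_isometry_to_incl hkd z.val hzr
      obtain ⟨C, hC, hCA⟩ := exists_isSO_agree hkd A
      have hCz : ∀ j, C (z.val j) = A (z.val j) := fun j => hCA _ (hA j)
      have hCmem : ∀ j, C (z.val j) ∈ LinearMap.range (inclLM k d) := by
        intro j; rw [hCz j]; exact hA j
      set x : Fin n → Euc k := fun j => truncLM hkd' (C (z.val j)) with hxdef
      have hxincl : ∀ j, inclEuc k d (x j) = C (z.val j) :=
        fun j => incl_trunc_of_mem hkd' (hCmem j)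
      have hCconf : (fun j => C (z.val j)) ∈ PolygonConfig d n ℓ :=
        config_map C.toLinearIsometry z.2
      have hxconf : x ∈ PolygonConfig k n ℓ := by
        constructor
        · intro j
          have h5 : ‖inclEuc k d (x j)‖ = ‖x j‖ := norm_inclEuc hkd' _
          rw [hxincl j] at h5
          rw [← h5]
          exact hCconf.1 j
        · have h6 : ∑ j, ℓ j • x j = truncLM hkd' (∑ j, ℓ j • C (z.val j)) := by
            rw [map_sum]
            exact Finset.sum_congr rfl fun j _ => (map_smul _ _ _).symm
          rw [h6, hCconf.2, map_zero]
      refine ⟨Quot.mk _ ⟨x, hxconf⟩, ?_⟩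
      show F ⟨x, hxconf⟩ = Quot.mk _ z
      refine Quot.sound ⟨C.symm, isSO_symm hC, fun j => ?_⟩
      show C.symm (inclEuc k d (x j)) = z.val j
      rw [hxincl j]
      exact C.symm_apply_apply _
end
end
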